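/- The set of affine doubly even-signed permutations is closed under composition and inverses, i.e., it forms a subgroup of the group of affine signed permutations. -/

import Mathlib

def IsAffineSigned (n : ℤ) (π : Equiv.Perm ℤ) : Prop :=
  (∀ i : ℤ, π (i + 2 * n) = π i + 2 * n) ∧ (∀ i : ℤ, π (-i) = -π i)

/-- The set of positive integers sent to negative integers. -/
def negSet (π : Equiv.Perm ℤ) : Set ℤ := {i : ℤ | 0 < i ∧ π i < 0}

/-- The set of integers less than `n` sent to integers greater than `n`. -/
def bigSet (n : ℤ) (π : Equiv.Perm ℤ) : Set ℤ := {i : ℤ | i < n ∧ n < π i}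

/-- An affine doubly even-signed permutation: an affine signed permutation for which
both `#neg π` and `#big π` are (finite and) even. -/
def IsDoublyEvenSigned (n : ℤ) (π : Equiv.Perm ℤ) : Prop :=
  IsAffineSigned n π ∧ (negSet π).Finite ∧ (bigSet n π).Finite ∧
    Even (negSet π).ncard ∧ Even (bigSet n π).ncard

theorem Equiv.Perm.apply_inv_self (f : Equiv.Perm ℤ) (x : ℤ) : f (f⁻¹ x) = x :=
  (Equiv.eq_symm_apply f).mp rfl

theorem Equiv.Perm.inv_apply_self (f : Equiv.Perm ℤ) (x : ℤ) : f⁻¹ (f x) = x :=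
  Equiv.Perm.inv_eq_iff_eq.mpr rfl

namespace DESaux

/-- Oddness of a permutation of `ℤ`. -/
def Odd' (π : Equiv.Perm ℤ) : Prop := ∀ i : ℤ, π (-i) = -π i

lemma odd_zero {π : Equiv.Perm ℤ} (h : Odd' π) : π 0 = 0 := by
  have h0 := h 0
  simp only [neg_zero] at h0
  omega

lemma odd_inv {π : Equiv.Perm ℤ} (h : Odd' π) : Odd' π⁻¹ := by
  intro i
  apply π.injective
  rw [Equiv.Perm.apply_inv_self, h, Equiv.Perm.apply_inv_self]

lemma odd_eq_zero_iff {π : Equiv.Perm ℤ} (h : Odd' π) {i : ℤ} : π i = 0 ↔ i = 0 := by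
  constructor
  · intro hi
    have : π i = π 0 := by rw [hi, odd_zero h]
    exact π.injective this
  · rintro rfl; exact odd_zero h

/-- Parity of the cardinality of a symmetric difference of two finite even sets. -/
lemma even_symmDiff {A B : Set ℤ} (hA : A.Finite) (hB : B.Finite)
    (eA : Even A.ncard) (eB : Even B.ncard) :
    (symmDiff A B).Finite ∧ Even (symmDiff A B).ncard := by
  have hfin : (symmDiff A B).Finite := (hA.union hB).subset Set.symmDiff_subset_union
  refine ⟨hfin, ?_⟩
  have hdisj : Disjoint (A \ B) (B \ A) := disjoint_sdiff_sdiff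
  have h1 : (symmDiff A B).ncard = (A \ B).ncard + (B \ A).ncard := by
    rw [Set.symmDiff_def]
    exact Set.ncard_union_eq hdisj (hA.diff) (hB.diff)
  have h2 : (A \ B).ncard + (A ∩ B).ncard = A.ncard := by
    rw [← Set.ncard_union_eq (Set.disjoint_of_subset_right Set.inter_subset_right
      Set.disjoint_sdiff_left) (hA.diff) (hA.inter_of_left _), Set.diff_union_inter]
  have h3 : (B \ A).ncard + (B ∩ A).ncard = B.ncard := by
    rw [← Set.ncard_union_eq (Set.disjoint_of_subset_right Set.inter_subset_right
      Set.disjoint_sdiff_left) (hB.diff) (hB.inter_of_left _), Set.diff_union_inter]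
  have h4 : (A ∩ B).ncard = (B ∩ A).ncard := by rw [Set.inter_comm]
  rw [Nat.even_iff] at eA eB ⊢
  omega

lemma negSet_mul_eq {π σ : Equiv.Perm ℤ} (hπ : Odd' π) (hσ : Odd' σ) :
    negSet (π * σ) = symmDiff (negSet σ) {i : ℤ | 0 < i ∧ |σ i| ∈ negSet π} := by
  ext i
  simp only [negSet, Set.mem_setOf_eq, Set.mem_symmDiff, Equiv.Perm.mul_apply]
  rcases lt_trichotomy (σ i) 0 with h | h | h
  · rw [abs_of_neg h, hπ]
    have hne : π (σ i) ≠ 0 := by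
      intro h0
      have : σ i = 0 := (odd_eq_zero_iff hπ).mp h0
      omega
    omega
  · have hi : i = 0 := by
      apply σ.injective
      rw [h, odd_zero hσ]
    subst hi
    omega
  · rw [abs_of_pos h]
    omega

lemma image_abs_inv {π σ : Equiv.Perm ℤ} (hπ : Odd' π) (hσ : Odd' σ) :
    {i : ℤ | 0 < i ∧ |σ i| ∈ negSet π} = (fun j => |σ⁻¹ j|) '' negSet π := by
  have hσi := odd_inv hσ
  ext i
  simp only [negSet, Set.mem_setOf_eq, Set.mem_image]
  constructor
  · rintro ⟨hi, h1, h2⟩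
    refine ⟨|σ i|, ⟨h1, h2⟩, ?_⟩
    rcases lt_trichotomy (σ i) 0 with h | h | h
    · rw [abs_of_neg h, hσi, Equiv.Perm.inv_apply_self, abs_neg, abs_of_pos hi]
    · exfalso
      rw [h] at h1
      simp at h1
    · rw [abs_of_pos h, Equiv.Perm.inv_apply_self, abs_of_pos hi]
  · rintro ⟨j, ⟨hj, hjneg⟩, rfl⟩
    have hne : σ⁻¹ j ≠ 0 := by
      intro h0
      have : j = 0 := (odd_eq_zero_iff hσi).mp h0
      omega
    rcases lt_trichotomy (σ⁻¹ j) 0 with h | h | h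
    · rw [abs_of_neg h]
      constructor
      · omega
      · rw [hσ, Equiv.Perm.apply_inv_self, abs_neg, abs_of_pos hj]
        exact ⟨hj, hjneg⟩
    · omega
    · rw [abs_of_pos h, Equiv.Perm.apply_inv_self, abs_of_pos hj]
      exact ⟨h, hj, hjneg⟩

/-- Closure of the `negSet` finiteness-and-parity condition under composition. -/
lemma neg_mul {π σ : Equiv.Perm ℤ} (hπ : Odd' π) (hσ : Odd' σ)
    (f1 : (negSet π).Finite) (f2 : (negSet σ).Finite)
    (e1 : Even (negSet π).ncard) (e2 : Even (negSet σ).ncard) :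
    (negSet (π * σ)).Finite ∧ Even (negSet (π * σ)).ncard := by
  rw [negSet_mul_eq hπ hσ, image_abs_inv hπ hσ]
  have hinj : Set.InjOn (fun j => |σ⁻¹ j|) (negSet π) := by
    intro a ha b hb hab
    simp only at hab
    rcases abs_eq_abs.mp hab with h | h
    · exact σ⁻¹.injective h
    · have : σ⁻¹ a = σ⁻¹ (-b) := by rw [odd_inv hσ]; exact h
      have hab2 : a = -b := σ⁻¹.injective this
      have := ha.1; have := hb.1
      simp only [negSet, Set.mem_setOf_eq] at ha hb
      omega
  have hfin : ((fun j => |σ⁻¹ j|) '' negSet π).Finite := f1.image _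
  have hcard : ((fun j => |σ⁻¹ j|) '' negSet π).ncard = (negSet π).ncard :=
    Set.ncard_image_of_injOn hinj
  exact even_symmDiff f2 hfin e2 (hcard ▸ e1)

lemma negSet_inv_eq {π : Equiv.Perm ℤ} (hπ : Odd' π) :
    negSet π⁻¹ = (fun j => -π j) '' negSet π := by
  ext i
  simp only [negSet, Set.mem_setOf_eq, Set.mem_image]
  constructor
  · rintro ⟨hi, hneg⟩
    refine ⟨-π⁻¹ i, ⟨by omega, ?_⟩, ?_⟩
    · rw [hπ, Equiv.Perm.apply_inv_self]; omega
    · rw [hπ, Equiv.Perm.apply_inv_self]; ring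
  · rintro ⟨j, ⟨hj, hjneg⟩, rfl⟩
    refine ⟨by omega, ?_⟩
    rw [odd_inv hπ, Equiv.Perm.inv_apply_self]
    omega

lemma neg_inv {π : Equiv.Perm ℤ} (hπ : Odd' π)
    (f1 : (negSet π).Finite) (e1 : Even (negSet π).ncard) :
    (negSet π⁻¹).Finite ∧ Even (negSet π⁻¹).ncard := by
  rw [negSet_inv_eq hπ]
  have hinj : Function.Injective (fun j : ℤ => -π j) := by
    intro a b hab
    simp only [neg_inj] at hab
    exact π.injective hab
  refine ⟨f1.image _, ?_⟩
  rw [Set.ncard_image_of_injective _ hinj]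
  exact e1

/-- Conjugation by translation by `n`. -/
def cj (n : ℤ) (π : Equiv.Perm ℤ) : Equiv.Perm ℤ :=
  (Equiv.addRight n)⁻¹ * π * (Equiv.addRight n)

lemma cj_apply (n : ℤ) (π : Equiv.Perm ℤ) (i : ℤ) : cj n π i = π (i + n) - n := by
  simp [cj, Equiv.Perm.mul_apply, Equiv.Perm.inv_def, Equiv.coe_addRight, sub_eq_add_neg]

lemma cj_mul (n : ℤ) (π σ : Equiv.Perm ℤ) : cj n (π * σ) = cj n π * cj n σ := by
  unfold cj; group

lemma cj_inv (n : ℤ) (π : Equiv.Perm ℤ) : cj n π⁻¹ = (cj n π)⁻¹ := by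
  unfold cj; group

lemma refl_apply {n : ℤ} {π : Equiv.Perm ℤ} (h : IsAffineSigned n π) (i : ℤ) :
    π (n - i) = 2 * n - π (n + i) := by
  have h1 : π (n + i) = π (i - n) + 2 * n := by
    have := h.1 (i - n)
    rw [show i - n + 2 * n = n + i by ring] at this
    exact this
  have h2 : π (n - i) = -π (i - n) := by
    rw [show n - i = -(i - n) by ring, h.2]
  omega

lemma cj_odd {n : ℤ} {π : Equiv.Perm ℤ} (h : IsAffineSigned n π) : Odd' (cj n π) := by
  intro i
  rw [cj_apply, cj_apply]
  have := refl_apply h i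
  rw [show -i + n = n - i by ring, show i + n = n + i by ring]
  omega

lemma bigSet_eq {n : ℤ} {π : Equiv.Perm ℤ} (h : IsAffineSigned n π) :
    bigSet n π = (fun j => n - j) '' negSet (cj n π) := by
  ext i
  simp only [bigSet, negSet, Set.mem_setOf_eq, Set.mem_image, cj_apply]
  constructor
  · rintro ⟨hi, hbig⟩
    refine ⟨n - i, ⟨by omega, ?_⟩, by ring⟩
    have := refl_apply h (i - n)
    rw [show n - (i - n) = n - i + n by ring, show n + (i - n) = i by ring] at this
    omega
  · rintro ⟨j, ⟨hj, hjneg⟩, rfl⟩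
    refine ⟨by omega, ?_⟩
    have := refl_apply h j
    rw [show n + j = j + n by ring] at this
    omega

lemma nsub_invol (n : ℤ) (S : Set ℤ) :
    (fun j => n - j) '' ((fun j => n - j) '' S) = S := by
  rw [Set.image_image]
  simp

lemma nsub_inj (n : ℤ) : Function.Injective (fun j : ℤ => n - j) := by
  intro a b hab; simp only at hab; omega

lemma negSet_cj_eq {n : ℤ} {π : Equiv.Perm ℤ} (h : IsAffineSigned n π) :
    negSet (cj n π) = (fun j => n - j) '' bigSet n π := by
  rw [bigSet_eq h, nsub_invol]

lemma transfer {n : ℤ} (S : Set ℤ) (hf : S.Finite) (he : Even S.ncard) :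
    ((fun j => n - j) '' S).Finite ∧ Even ((fun j => n - j) '' S).ncard := by
  refine ⟨hf.image _, ?_⟩
  rw [Set.ncard_image_of_injective _ (nsub_inj n)]
  exact he

lemma affine_mul {n : ℤ} {π σ : Equiv.Perm ℤ} (hπ : IsAffineSigned n π)
    (hσ : IsAffineSigned n σ) : IsAffineSigned n (π * σ) := by
  constructor
  · intro i
    rw [Equiv.Perm.mul_apply, Equiv.Perm.mul_apply, hσ.1, hπ.1]
  · intro i
    rw [Equiv.Perm.mul_apply, Equiv.Perm.mul_apply, hσ.2, hπ.2]

lemma affine_inv {n : ℤ} {π : Equiv.Perm ℤ} (hπ : IsAffineSigned n π) :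
    IsAffineSigned n π⁻¹ := by
  constructor
  · intro i
    apply π.injective
    rw [Equiv.Perm.apply_inv_self, hπ.1, Equiv.Perm.apply_inv_self]
  · exact odd_inv hπ.2

end DESaux

/-- The affine doubly even-signed permutations are closed under composition and inverses. -/
theorem doublyEvenSigned_closed (n : ℤ) (hn : 2 ≤ n) (π σ : Equiv.Perm ℤ)
    (hπ : IsDoublyEvenSigned n π) (hσ : IsDoublyEvenSigned n σ) :
    IsDoublyEvenSigned n (π * σ) ∧ IsDoublyEvenSigned n π⁻¹ := by
  obtain ⟨haπ, hnfπ, hbfπ, hneπ, hbeπ⟩ := hπ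
  obtain ⟨haσ, hnfσ, hbfσ, hneσ, hbeσ⟩ := hσ
  -- negSet facts for composition
  have hnmul := DESaux.neg_mul haπ.2 haσ.2 hnfπ hnfσ hneπ hneσ
  -- negSet facts for cj's
  have hcjπ : (negSet (DESaux.cj n π)).Finite ∧ Even (negSet (DESaux.cj n π)).ncard := by
    rw [DESaux.negSet_cj_eq haπ]
    exact DESaux.transfer _ hbfπ hbeπ
  have hcjσ : (negSet (DESaux.cj n σ)).Finite ∧ Even (negSet (DESaux.cj n σ)).ncard := by
    rw [DESaux.negSet_cj_eq haσ]
    exact DESaux.transfer _ hbfσ hbeσ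
  have hamul := DESaux.affine_mul haπ haσ
  have hainv := DESaux.affine_inv haπ
  -- bigSet facts for composition
  have hbmul : (bigSet n (π * σ)).Finite ∧ Even (bigSet n (π * σ)).ncard := by
    have := DESaux.neg_mul (DESaux.cj_odd haπ) (DESaux.cj_odd haσ)
      hcjπ.1 hcjσ.1 hcjπ.2 hcjσ.2
    rw [← DESaux.cj_mul] at this
    rw [DESaux.bigSet_eq hamul]
    exact DESaux.transfer _ this.1 this.2
  -- negSet facts for inverse
  have hninv := DESaux.neg_inv haπ.2 hnfπ hneπ
  -- bigSet facts for inverse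
  have hbinv : (bigSet n π⁻¹).Finite ∧ Even (bigSet n π⁻¹).ncard := by
    have := DESaux.neg_inv (DESaux.cj_odd haπ) hcjπ.1 hcjπ.2
    rw [← DESaux.cj_inv] at this
    rw [DESaux.bigSet_eq hainv]
    exact DESaux.transfer _ this.1 this.2
  exact ⟨⟨hamul, hnmul.1, hbmul.1, hnmul.2, hbmul.2⟩,
    ⟨hainv, hninv.1, hbinv.1, hninv.2, hbinv.2⟩⟩
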